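/- For the exponential integral E_1(x) = ∫_x^∞ e^{-t}/t dt, the limit as x → 0⁺ of E_1(x) + ln(x) equals -γ, where γ is the Euler–Mascheroni constant. -/

import Mathlib

open MeasureTheory Real Filter Set

/-- Integrability of `e^{-t} log t` on `(0, ∞)`. -/
lemma integrableOn_exp_neg_mul_log :
    IntegrableOn (fun t : ℝ => Real.exp (-t) * Real.log t) (Ioi 0) := by
  have hmeas : AEStronglyMeasurable (fun t : ℝ => Real.exp (-t) * Real.log t)
      (volume.restrict (Ioi (0:ℝ))) :=
    ((Real.measurable_exp.comp measurable_neg).mul Real.measurable_log).aestronglyMeasurable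
  rw [← Ioc_union_Ioi_eq_Ioi (zero_le_one : (0:ℝ) ≤ 1), IntegrableOn, Measure.restrict_union
    (Ioc_disjoint_Ioi le_rfl) measurableSet_Ioi]
  rw [integrable_add_measure]
  constructor
  · -- on (0, 1], dominate by 2 * t^(-1/2)
    have hg : IntegrableOn (fun t : ℝ => 2 * t ^ (-1/2 : ℝ)) (Ioc 0 1) := by
      have := (intervalIntegral.intervalIntegrable_rpow' (a := 0) (b := 1)
        (r := (-1/2 : ℝ)) (by norm_num))
      rw [intervalIntegrable_iff_integrableOn_Ioc_of_le zero_le_one] at this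
      exact this.const_mul 2
    refine Integrable.mono' hg (hmeas.mono_measure
      (Measure.restrict_mono Ioc_subset_Ioi_self le_rfl)) ?_
    filter_upwards [ae_restrict_mem measurableSet_Ioc] with t ht
    have ht0 : 0 < t := ht.1
    have ht1 : t ≤ 1 := ht.2
    have hexp : Real.exp (-t) ≤ 1 := by
      have : Real.exp (-t) ≤ Real.exp 0 := Real.exp_le_exp.mpr (by linarith)
      simpa using this
    have hlog : |Real.log t| ≤ 2 * t ^ (-1/2 : ℝ) := by
      have hlt : Real.log t ≤ 0 := Real.log_nonpos ht0.le ht1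
      rw [abs_of_nonpos hlt]
      have h1 : Real.log (t ^ (-1/2 : ℝ)) ≤ t ^ (-1/2 : ℝ) - 1 :=
        Real.log_le_sub_one_of_pos (Real.rpow_pos_of_pos ht0 _)
      rw [Real.log_rpow ht0] at h1
      have h2 : (0:ℝ) < t ^ (-1/2 : ℝ) := Real.rpow_pos_of_pos ht0 _
      nlinarith
    have := Real.exp_pos (-t)
    rw [norm_mul, Real.norm_eq_abs, Real.norm_eq_abs, abs_of_pos this]
    calc Real.exp (-t) * |Real.log t| ≤ 1 * |Real.log t| := by
          apply mul_le_mul_of_nonneg_right hexp (abs_nonneg _)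
      _ = |Real.log t| := one_mul _
      _ ≤ 2 * t ^ (-1/2 : ℝ) := hlog
  · -- on (1, ∞), dominate by e^{-t} * t
    have hg : IntegrableOn (fun t : ℝ => Real.exp (-t) * t ^ ((2:ℝ) - 1)) (Ioi 1) :=
      (Real.GammaIntegral_convergent (by norm_num : (0:ℝ) < 2)).mono_set
        (Ioi_subset_Ioi zero_le_one)
    refine Integrable.mono' hg (hmeas.mono_measure
      (Measure.restrict_mono (Ioi_subset_Ioi zero_le_one) le_rfl)) ?_
    filter_upwards [ae_restrict_mem measurableSet_Ioi] with t ht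
    have ht1 : (1:ℝ) < t := ht
    have hlogpos : 0 ≤ Real.log t := Real.log_nonneg ht1.le
    have hlog : Real.log t ≤ t ^ ((2:ℝ) - 1) := by
      have := Real.log_le_sub_one_of_pos (lt_trans zero_lt_one ht1)
      rw [show ((2:ℝ) - 1) = 1 by norm_num, Real.rpow_one]
      linarith
    have hexp := Real.exp_pos (-t)
    rw [norm_mul, Real.norm_eq_abs, Real.norm_eq_abs, abs_of_pos hexp,
      abs_of_nonneg hlogpos]
    exact mul_le_mul_of_nonneg_left hlog hexp.le

/-- The value `∫_0^∞ e^{-t} log t dt = -γ`, from the derivative of `Γ` at `1`. -/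
lemma integral_exp_neg_mul_log :
    ∫ t in Ioi (0:ℝ), Real.exp (-t) * Real.log t = -Real.eulerMascheroniConstant := by
  have h1 : HasDerivAt Complex.Gamma (-(Real.eulerMascheroniConstant:ℂ)) 1 := by
    simpa using Complex.hasDerivAt_Gamma_one
  have h2 := Complex.hasDerivAt_GammaIntegral (s := 1) (by norm_num)
  have heq : Complex.Gamma =ᶠ[nhds (1:ℂ)] Complex.GammaIntegral := by
    have hopen : IsOpen {s : ℂ | 0 < s.re} := isOpen_lt continuous_const Complex.continuous_re
    filter_upwards [hopen.mem_nhds (by norm_num : (0:ℝ) < (1:ℂ).re)] with s hs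
    exact Complex.Gamma_eq_integral hs
  have h3 : HasDerivAt Complex.Gamma
      (∫ t : ℝ in Ioi 0, (t:ℂ) ^ ((1:ℂ) - 1) * (Real.log t * Real.exp (-t))) 1 :=
    h2.congr_of_eventuallyEq heq
  have h4 := h1.unique h3
  have h5 : (∫ t : ℝ in Ioi 0, (t:ℂ) ^ ((1:ℂ) - 1) * (Real.log t * Real.exp (-t)))
      = ((∫ t : ℝ in Ioi 0, Real.log t * Real.exp (-t) : ℝ) : ℂ) := by
    simp_rw [sub_self, Complex.cpow_zero, one_mul, ← Complex.ofReal_mul]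
    exact integral_ofReal
  rw [h5] at h4
  have h6 : (∫ t : ℝ in Ioi 0, Real.log t * Real.exp (-t))
      = ∫ t in Ioi (0:ℝ), Real.exp (-t) * Real.log t := by
    congr 1; ext t; ring
  have := Complex.ofReal_injective (by exact_mod_cast h4.symm :
    ((∫ t : ℝ in Ioi 0, Real.log t * Real.exp (-t) : ℝ) : ℂ)
      = ((-Real.eulerMascheroniConstant : ℝ) : ℂ))
  rw [← h6, this]

/-- The tail integral converges to the full integral. -/
lemma tendsto_tail_integral :
    Tendsto (fun x : ℝ => ∫ t in Ioi x, Real.exp (-t) * Real.log t)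
      (nhdsWithin 0 (Ioi 0)) (nhds (∫ t in Ioi (0:ℝ), Real.exp (-t) * Real.log t)) := by
  set f : ℝ → ℝ := fun t => Real.exp (-t) * Real.log t with hf
  have hint := integrableOn_exp_neg_mul_log
  have hIcc : IntegrableOn f (Icc 0 1) := by
    rw [integrableOn_Icc_iff_integrableOn_Ioc]
    exact hint.mono_set Ioc_subset_Ioi_self
  have hcont : ContinuousOn (fun x => ∫ t in Ioc 0 x, f t) (Icc 0 1) :=
    intervalIntegral.continuousOn_primitive hIcc
  have hF0 : Tendsto (fun x => ∫ t in Ioc 0 x, f t) (nhdsWithin 0 (Ioi 0)) (nhds 0) := by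
    have h1 : Tendsto (fun x => ∫ t in Ioc 0 x, f t) (nhdsWithin 0 (Icc 0 1))
        (nhds (∫ t in Ioc (0:ℝ) 0, f t)) :=
      hcont 0 (by constructor <;> norm_num)
    rw [show (∫ t in Ioc (0:ℝ) 0, f t) = 0 by simp] at h1
    have h2 : nhdsWithin (0:ℝ) (Ioi 0) = nhdsWithin 0 (Ioo 0 1) :=
      (nhdsWithin_Ioo_eq_nhdsGT one_pos).symm
    rw [h2]
    exact h1.mono_left (nhdsWithin_mono 0 Ioo_subset_Icc_self)
  have hsplit : ∀ x : ℝ, 0 < x →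
      (∫ t in Ioi x, f t) = (∫ t in Ioi (0:ℝ), f t) - ∫ t in Ioc 0 x, f t := by
    intro x hx
    have hu : Ioc (0:ℝ) x ∪ Ioi x = Ioi 0 := Ioc_union_Ioi_eq_Ioi hx.le
    have := setIntegral_union (Ioc_disjoint_Ioi le_rfl) measurableSet_Ioi
      (hint.mono_set (hu ▸ subset_union_left)) (hint.mono_set (hu ▸ subset_union_right))
    rw [hu] at this
    linarith [this]
  have : Tendsto (fun x : ℝ => (∫ t in Ioi (0:ℝ), f t) - ∫ t in Ioc 0 x, f t)
      (nhdsWithin 0 (Ioi 0)) (nhds ((∫ t in Ioi (0:ℝ), f t) - 0)) :=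
    tendsto_const_nhds.sub hF0
  rw [sub_zero] at this
  refine this.congr' ?_
  filter_upwards [self_mem_nhdsWithin] with x hx
  exact (hsplit x hx).symm

/-- The boundary term `(1 - e^{-x}) log x` tends to `0`. -/
lemma tendsto_boundary :
    Tendsto (fun x : ℝ => (1 - Real.exp (-x)) * Real.log x)
      (nhdsWithin 0 (Ioi 0)) (nhds 0) := by
  have hlow : Tendsto (fun x : ℝ => Real.log x * x ^ (1:ℝ)) (nhdsWithin 0 (Ioi 0)) (nhds 0) :=
    tendsto_log_mul_rpow_nhdsGT_zero one_pos
  have hhigh : Tendsto (fun _ : ℝ => (0:ℝ)) (nhdsWithin 0 (Ioi 0)) (nhds 0) := tendsto_const_nhds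
  refine tendsto_of_tendsto_of_tendsto_of_le_of_le' hlow hhigh ?_ ?_
  · filter_upwards [self_mem_nhdsWithin, Ioo_mem_nhdsGT_of_mem
      (by constructor <;> norm_num : (0:ℝ) ∈ Ico 0 1)] with x hx hx1
    have hxpos : 0 < x := hx
    have hlog : Real.log x ≤ 0 := Real.log_nonpos hxpos.le hx1.2.le
    have h1 : 1 - Real.exp (-x) ≤ x := by nlinarith [Real.add_one_le_exp (-x)]
    rw [Real.rpow_one]
    calc Real.log x * x = x * Real.log x := mul_comm _ _
      _ ≤ (1 - Real.exp (-x)) * Real.log x := mul_le_mul_of_nonpos_right h1 hlog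
  · filter_upwards [self_mem_nhdsWithin, Ioo_mem_nhdsGT_of_mem
      (by constructor <;> norm_num : (0:ℝ) ∈ Ico 0 1)] with x hx hx1
    have hxpos : 0 < x := hx
    have hlog : Real.log x ≤ 0 := Real.log_nonpos hxpos.le hx1.2.le
    have h0 : 0 ≤ 1 - Real.exp (-x) := by
      have : Real.exp (-x) ≤ Real.exp 0 := Real.exp_le_exp.mpr (by linarith)
      simpa using this
    exact mul_nonpos_of_nonneg_of_nonpos h0 hlog

/-- The exponential integral `E₁(x) = ∫_x^∞ e^{-t}/t dt`. -/
noncomputable def E1 (x : ℝ) : ℝ := ∫ t in Set.Ioi x, Real.exp (-t) / t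

/-- Integration by parts: `E1 x = -e^{-x} log x + ∫_x^∞ e^{-t} log t dt` for `x > 0`. -/
lemma E1_eq (x : ℝ) (hx : 0 < x) :
    E1 x = -(Real.exp (-x) * Real.log x) + ∫ t in Ioi x, Real.exp (-t) * Real.log t := by
  have hu : ∀ t ∈ Ioi x, HasDerivAt (fun t : ℝ => Real.exp (-t)) (-Real.exp (-t)) t := by
    intro t _
    simpa [Function.comp_def] using ((Real.hasDerivAt_exp (-t)).comp t (hasDerivAt_neg t))
  have hv : ∀ t ∈ Ioi x, HasDerivAt Real.log t⁻¹ t := fun t ht =>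
    Real.hasDerivAt_log (lt_trans hx ht).ne'
  have huv' : IntegrableOn (fun t : ℝ => Real.exp (-t) * t⁻¹) (Ioi x) := by
    have hg : IntegrableOn (fun t : ℝ => x⁻¹ * Real.exp (-1 * t)) (Ioi x) :=
      (exp_neg_integrableOn_Ioi x one_pos).const_mul _
    refine Integrable.mono' hg
      (((Real.measurable_exp.comp measurable_neg).mul measurable_inv).aestronglyMeasurable) ?_
    filter_upwards [ae_restrict_mem measurableSet_Ioi] with t ht
    have htx : x < t := ht
    have htpos : 0 < t := lt_trans hx htx
    have hexp := Real.exp_pos (-t)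
    rw [norm_mul, Real.norm_eq_abs, Real.norm_eq_abs, abs_of_pos hexp,
      abs_of_pos (inv_pos.mpr htpos), neg_one_mul, mul_comm]
    exact mul_le_mul_of_nonneg_right (inv_anti₀ hx htx.le) hexp.le
  have hu'v : IntegrableOn (fun t : ℝ => -Real.exp (-t) * Real.log t) (Ioi x) := by
    have h := (integrableOn_exp_neg_mul_log.mono_set (Ioi_subset_Ioi hx.le)).neg
    have he : (fun t : ℝ => -Real.exp (-t) * Real.log t)
        = -(fun t : ℝ => Real.exp (-t) * Real.log t) := by funext t; simp [neg_mul]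
    rw [he]; exact h
  have h_zero : Tendsto (fun t : ℝ => Real.exp (-t) * Real.log t)
      (nhdsWithin x (Ioi x)) (nhds (Real.exp (-x) * Real.log x)) := by
    have : ContinuousAt (fun t : ℝ => Real.exp (-t) * Real.log t) x :=
      ((Real.continuous_exp.comp continuous_neg).continuousAt).mul
        (Real.continuousAt_log hx.ne')
    exact this.continuousWithinAt.tendsto
  have h_infty : Tendsto (fun t : ℝ => Real.exp (-t) * Real.log t) atTop (nhds 0) := by
    have hup : Tendsto (fun t : ℝ => t ^ 1 * Real.exp (-t)) atTop (nhds 0) :=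
      tendsto_pow_mul_exp_neg_atTop_nhds_zero 1
    refine tendsto_of_tendsto_of_tendsto_of_le_of_le' tendsto_const_nhds hup ?_ ?_
    · filter_upwards [eventually_ge_atTop (1:ℝ)] with t ht
      exact mul_nonneg (Real.exp_pos _).le (Real.log_nonneg ht)
    · filter_upwards [eventually_ge_atTop (1:ℝ)] with t ht
      have : Real.log t ≤ t := by
        have := Real.log_le_sub_one_of_pos (lt_of_lt_of_le zero_lt_one ht)
        linarith
      calc Real.exp (-t) * Real.log t ≤ Real.exp (-t) * t :=
            mul_le_mul_of_nonneg_left this (Real.exp_pos _).le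
        _ = t ^ 1 * Real.exp (-t) := by ring
  have key := integral_Ioi_mul_deriv_eq_deriv_mul hu hv huv' hu'v h_zero h_infty
  have hE : E1 x = ∫ t in Ioi x, Real.exp (-t) * t⁻¹ := by
    unfold E1
    simp_rw [div_eq_mul_inv]
  rw [hE, key]
  have : (∫ t in Ioi x, -Real.exp (-t) * Real.log t)
      = -∫ t in Ioi x, Real.exp (-t) * Real.log t := by
    rw [← integral_neg]; congr 1; ext t; ring
  rw [this]; ring

theorem stmt0 :
    Tendsto (fun x : ℝ => E1 x + Real.log x) (nhdsWithin 0 (Set.Ioi 0))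
      (nhds (-Real.eulerMascheroniConstant)) := by
  have h1 : Tendsto (fun x : ℝ => (1 - Real.exp (-x)) * Real.log x
      + ∫ t in Ioi x, Real.exp (-t) * Real.log t) (nhdsWithin 0 (Ioi 0))
      (nhds (0 + ∫ t in Ioi (0:ℝ), Real.exp (-t) * Real.log t)) :=
    tendsto_boundary.add tendsto_tail_integral
  rw [zero_add, integral_exp_neg_mul_log] at h1
  refine h1.congr' ?_
  filter_upwards [self_mem_nhdsWithin] with x hx
  rw [E1_eq x hx]
  ring
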